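/- arXiv:2307.03540 — 2 statements merged into one kernel-verified Lean document; each statement's English description precedes it below -/
import Mathlib

section
/- In a dual weak brace S, for all a, b, c ∈ S, (a ∘ b) · c = a · (b · c) + b · c + a · c, where a · b := -a + a ∘ b - b. -/
/-- A weak brace: `(S,+)` and `(S,∘)` are inverse semigroups satisfying
`a ∘ (b + c) = a ∘ b - a + a ∘ c` and `a ∘ a⁻ = -a + a`. -/
class WeakBrace (S : Type*) where
  add : S → S → S
  mul : S → S → S
  neg : S → S
  inv : S → S
  add_assoc : ∀ a b c : S, add (add a b) c = add a (add b c)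
  mul_assoc : ∀ a b c : S, mul (mul a b) c = mul a (mul b c)
  add_reg : ∀ a : S, add (add a (neg a)) a = a
  neg_reg : ∀ a : S, add (add (neg a) a) (neg a) = neg a
  neg_unique : ∀ a x : S, add (add a x) a = a → add (add x a) x = x → x = neg a
  mul_reg : ∀ a : S, mul (mul a (inv a)) a = a
  inv_reg : ∀ a : S, mul (mul (inv a) a) (inv a) = inv a
  inv_unique : ∀ a x : S, mul (mul a x) a = a → mul (mul x a) x = x → x = inv a
  distrib : ∀ a b c : S, mul a (add b c) = add (add (mul a b) (neg a)) (mul a c)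
  link : ∀ a : S, mul a (inv a) = add (neg a) a

/-- A dual weak brace: a weak brace whose multiplicative semigroup is Clifford. -/
class DualWeakBrace (S : Type*) extends WeakBrace S where
  clifford : ∀ a : S, WeakBrace.mul a (WeakBrace.inv a) = WeakBrace.mul (WeakBrace.inv a) a

namespace WeakBrace

variable {S : Type*} [WeakBrace S]

/-- `λ_a(b) = -a + a ∘ b`. -/
def lam (a b : S) : S := add (neg a) (mul a b)

/-- `ρ_b(a) = (-a + a ∘ b)⁻ ∘ a ∘ b`. -/
def rho (b a : S) : S := mul (mul (inv (lam a b)) a) b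

/-- `a · b = -a + a ∘ b - b`. -/
def cdot (a b : S) : S := add (add (neg a) (mul a b)) (neg b)

/-- `a⁰ = a - a`. -/
def sq (a : S) : S := add a (neg a)

/-- Additive idempotent (the sets of idempotents of `+` and `∘` coincide). -/
def IsIdem (e : S) : Prop := add e e = e

/-- `[a,b]₊ = -a - b + a + b`. -/
def brkt (a b : S) : S := add (add (add (neg a) (neg b)) a) b

/-- `I` is a full inverse subsemigroup of `(S,+)`. -/
def IsFullAddSub (I : Set S) : Prop :=
  (∀ e : S, IsIdem e → e ∈ I) ∧ (∀ x ∈ I, ∀ y ∈ I, add x y ∈ I) ∧ (∀ x ∈ I, neg x ∈ I)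

/-- `I` is a normal subsemigroup of `(S,+)`. -/
def IsNormalAdd (I : Set S) : Prop :=
  IsFullAddSub I ∧ ∀ a : S, ∀ x ∈ I, add (add (neg a) x) a ∈ I

/-- `I` is a normal subsemigroup of `(S,∘)`. -/
def IsNormalMul (I : Set S) : Prop :=
  (∀ e : S, IsIdem e → e ∈ I) ∧ (∀ x ∈ I, ∀ y ∈ I, mul x y ∈ I) ∧ (∀ x ∈ I, inv x ∈ I) ∧
    ∀ a : S, ∀ x ∈ I, mul (mul (inv a) x) a ∈ I

/-- `I` is a left ideal of the weak brace `S`. -/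
def IsLeftIdeal (I : Set S) : Prop :=
  IsFullAddSub I ∧ ∀ a : S, ∀ x ∈ I, lam a x ∈ I

/-- `I` is an ideal of the weak brace `S`. -/
def IsIdeal (I : Set S) : Prop :=
  IsNormalAdd I ∧ (∀ a : S, ∀ x ∈ I, lam a x ∈ I) ∧ IsNormalMul I

/-- The socle `Soc(S)`. -/
def Soc (S : Type*) [WeakBrace S] : Set S :=
  {a | ∀ b : S, add a b = mul a b ∧ add a b = add b a}

/-- The annihilator `Ann(S)`. -/
def Ann (S : Type*) [WeakBrace S] : Set S :=
  {a | ∀ b : S, add a b = add b a ∧ add a b = mul a b ∧ mul a b = mul b a}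

/-- The congruence `a ∼_I b ⟺ a⁰ = b⁰ and -a + b ∈ I` associated to an ideal `I`. -/
def simI (I : Set S) (a b : S) : Prop := sq a = sq b ∧ add (neg a) b ∈ I

/-- Membership in the inverse subsemigroup of `(S,+)` generated by a set `X`. -/
inductive genAdd (X : Set S) : S → Prop
  | base : ∀ x ∈ X, genAdd X x
  | add : ∀ a b : S, genAdd X a → genAdd X b → genAdd X (add a b)
  | neg : ∀ a : S, genAdd X a → genAdd X (neg a)

/-- `X · Y`: the additive inverse subsemigroup generated by the elements `x · y`. -/
def cdotSet (X Y : Set S) : Set S :=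
  {s | genAdd {z | ∃ x ∈ X, ∃ y ∈ Y, z = cdot x y} s}

/-- `S^(n)` for `n ≥ 1`: `S^(1) = S`, `S^(n+1) = S^(n) · S`. -/
def Spow (S : Type*) [WeakBrace S] : ℕ → Set S
  | 0 => Set.univ
  | 1 => Set.univ
  | (n+2) => cdotSet (Spow S (n+1)) Set.univ

end WeakBrace

/-- Bundled inverse semigroup data (generic over the two operations of a weak brace). -/
structure InvSg (S : Type*) where
  op : S → S → S
  iv : S → S
  assoc : ∀ a b c : S, op (op a b) c = op a (op b c)
  reg : ∀ a : S, op (op a (iv a)) a = a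
  ivreg : ∀ a : S, op (op (iv a) a) (iv a) = iv a
  uniq : ∀ a x : S, op (op a x) a = a → op (op x a) x = x → x = iv a

namespace InvSg

variable {S : Type*} (G : InvSg S)

theorem iv_invol (a : S) : G.iv (G.iv a) = a :=
  (G.uniq _ a (G.ivreg a) (G.reg a)).symm

theorem idem_iv {e : S} (he : G.op e e = e) : G.iv e = e :=
  (G.uniq e e (by rw [he, he]) (by rw [he, he])).symm

theorem xx_idem (a : S) : G.op (G.op a (G.iv a)) (G.op a (G.iv a)) = G.op a (G.iv a) := by
  rw [← G.assoc, G.reg]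

theorem xx_idem' (a : S) : G.op (G.op (G.iv a) a) (G.op (G.iv a) a) = G.op (G.iv a) a := by
  rw [← G.assoc, G.ivreg]

theorem idem_op {e f : S} (he : G.op e e = e) (hf : G.op f f = f) :
    G.op (G.op e f) (G.op e f) = G.op e f := by
  set u := G.iv (G.op e f) with hu
  have A := G.assoc
  have he' : ∀ x, G.op e (G.op e x) = G.op e x := fun x => by rw [← A, he]
  have hf' : ∀ x, G.op f (G.op f x) = G.op f x := fun x => by rw [← A, hf]
  have hreg' : G.op e (G.op f (G.op u (G.op e f))) = G.op e f := by
    have h := G.reg (G.op e f); simpa only [A] using h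
  have hivr' : ∀ x, G.op u (G.op e (G.op f (G.op u x))) = G.op u x := fun x => by
    have h := congrArg (fun y => G.op y x) (G.ivreg (G.op e f))
    simpa only [A] using h
  have c1 : G.op (G.op (G.op e f) (G.op (G.op f u) e)) (G.op e f) = G.op e f := by
    simp only [A]; rw [hf', he']; exact hreg'
  have c2 : G.op (G.op (G.op (G.op f u) e) (G.op e f)) (G.op (G.op f u) e)
      = G.op (G.op f u) e := by
    simp only [A]; rw [he', hf', hivr' e]
  have hv : G.op (G.op f u) e = u := G.uniq _ _ c1 c2
  have hv' : G.op f (G.op u e) = u := by simpa only [A] using hv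
  have hu_idem : G.op u u = u := by
    conv_lhs => rw [← hv']
    calc G.op (G.op f (G.op u e)) (G.op f (G.op u e))
        = G.op f (G.op u (G.op e (G.op f (G.op u e)))) := by simp only [A]
      _ = G.op f (G.op u e) := by rw [hivr' e]
      _ = u := hv'
  have hef : G.op e f = u := by
    have h1 : G.iv u = G.op e f := G.iv_invol (G.op e f)
    have h2 : G.iv u = u := G.idem_iv hu_idem
    rw [← h1, h2]
  rw [hef]; exact hu_idem

theorem idem_comm {e f : S} (he : G.op e e = e) (hf : G.op f f = f) :
    G.op e f = G.op f e := by
  have A := G.assoc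
  have he' : ∀ x, G.op e (G.op e x) = G.op e x := fun x => by rw [← A, he]
  have hf' : ∀ x, G.op f (G.op f x) = G.op f x := fun x => by rw [← A, hf]
  have hef : G.op (G.op e f) (G.op e f) = G.op e f := G.idem_op he hf
  have hfe : G.op (G.op f e) (G.op f e) = G.op f e := G.idem_op hf he
  have hef' : G.op e (G.op f (G.op e f)) = G.op e f := by simpa only [A] using hef
  have hfe' : G.op f (G.op e (G.op f e)) = G.op f e := by simpa only [A] using hfe
  have c1 : G.op (G.op (G.op e f) (G.op f e)) (G.op e f) = G.op e f := by
    simp only [A]; rw [hf', he']; exact hef'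
  have c2 : G.op (G.op (G.op f e) (G.op e f)) (G.op f e) = G.op f e := by
    simp only [A]; rw [he', hf']; exact hfe'
  have : G.op f e = G.iv (G.op e f) := G.uniq _ _ c1 c2
  rw [this, G.idem_iv hef]

theorem iv_op (a b : S) : G.iv (G.op a b) = G.op (G.iv b) (G.iv a) := by
  have A := G.assoc
  -- commuting idempotents b⋆b⁻ and a⁻⋆a, with a trailing context
  have hcomm := G.idem_comm (G.xx_idem b) (G.xx_idem' a)
  -- c1 : (a⋆b)⋆(b⁻⋆a⁻)⋆(a⋆b) = a⋆b
  have c1 : G.op (G.op (G.op a b) (G.op (G.iv b) (G.iv a))) (G.op a b) = G.op a b := by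
    have step : G.op (G.op (G.op a b) (G.op (G.iv b) (G.iv a))) (G.op a b)
        = G.op a (G.op (G.op (G.op b (G.iv b)) (G.op (G.iv a) a)) b) := by
      simp only [A]
    rw [step, hcomm]
    -- a ⋆ ((a⁻⋆a)⋆(b⋆b⁻)) ⋆ b  →  (a⋆a⁻⋆a)⋆(b⋆b⁻⋆b)
    have step2 : G.op a (G.op (G.op (G.op (G.iv a) a) (G.op b (G.iv b))) b)
        = G.op (G.op (G.op a (G.iv a)) a) (G.op (G.op b (G.iv b)) b) := by
      simp only [A]
    rw [step2, G.reg a]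
    have : G.op (G.op b (G.iv b)) b = b := G.reg b
    rw [this]
  have c2 : G.op (G.op (G.op (G.iv b) (G.iv a)) (G.op a b)) (G.op (G.iv b) (G.iv a))
      = G.op (G.iv b) (G.iv a) := by
    have hcomm2 := G.idem_comm (G.xx_idem' a) (G.xx_idem b)
    have step : G.op (G.op (G.op (G.iv b) (G.iv a)) (G.op a b)) (G.op (G.iv b) (G.iv a))
        = G.op (G.iv b) (G.op (G.op (G.op (G.iv a) a) (G.op b (G.iv b))) (G.iv a)) := by
      simp only [A]
    rw [step, hcomm2]
    have step2 : G.op (G.iv b) (G.op (G.op (G.op b (G.iv b)) (G.op (G.iv a) a)) (G.iv a))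
        = G.op (G.op (G.op (G.iv b) b) (G.iv b)) (G.op (G.op (G.iv a) a) (G.iv a)) := by
      simp only [A]
    rw [step2, G.ivreg b, G.ivreg a]
  exact (G.uniq _ _ c1 c2).symm

/-- If every element commutes with its inverse, idempotents are central. -/
theorem central (cliff : ∀ a : S, G.op a (G.iv a) = G.op (G.iv a) a)
    {e : S} (he : G.op e e = e) (a : S) : G.op e a = G.op a e := by
  have A := G.assoc
  have hive : G.iv e = e := G.idem_iv he
  have he' : ∀ x, G.op e (G.op e x) = G.op e x := fun x => by rw [← A, he]
  have hf : G.op (G.op a (G.iv a)) (G.op a (G.iv a)) = G.op a (G.iv a) := G.xx_idem a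
  have hcomm := G.idem_comm he hf
  have hivea : G.iv (G.op e a) = G.op (G.iv a) e := by rw [G.iv_op, hive]
  -- k1 : (a⋆a⁻)⋆e = a⁻⋆(e⋆a)
  have k1 : G.op (G.op a (G.iv a)) e = G.op (G.iv a) (G.op e a) := by
    have h := cliff (G.op e a)
    rw [hivea] at h
    -- LHS of h : (e⋆a)⋆(a⁻⋆e) = e⋆((a⋆a⁻)⋆e) = e⋆(e⋆(a⋆a⁻)) = e⋆(a⋆a⁻) = (a⋆a⁻)⋆e
    have hL : G.op (G.op e a) (G.op (G.iv a) e) = G.op (G.op a (G.iv a)) e := by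
      calc G.op (G.op e a) (G.op (G.iv a) e)
          = G.op e (G.op (G.op a (G.iv a)) e) := by simp only [A]
        _ = G.op e (G.op e (G.op a (G.iv a))) := by rw [hcomm]
        _ = G.op e (G.op a (G.iv a)) := he' _
        _ = G.op (G.op a (G.iv a)) e := hcomm
    have hR : G.op (G.op (G.iv a) e) (G.op e a) = G.op (G.iv a) (G.op e a) := by
      calc G.op (G.op (G.iv a) e) (G.op e a)
          = G.op (G.iv a) (G.op (G.op e e) a) := by simp only [A]
        _ = G.op (G.iv a) (G.op e a) := by rw [he]
    rw [hL, hR] at h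
    exact h
  -- k2 : a⋆(a⋆a⁻) = a
  have k2 : G.op a (G.op a (G.iv a)) = a := by
    rw [cliff a, ← A]; exact G.reg a
  -- main chain
  have star : G.op (G.op (G.op a (G.iv a)) e) (G.op e a) = G.op e a := by
    have h := G.reg (G.op e a)
    rw [hivea] at h
    have hL : G.op (G.op e a) (G.op (G.iv a) e) = G.op (G.op a (G.iv a)) e := by
      calc G.op (G.op e a) (G.op (G.iv a) e)
          = G.op e (G.op (G.op a (G.iv a)) e) := by simp only [A]
        _ = G.op e (G.op e (G.op a (G.iv a))) := by rw [hcomm]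
        _ = G.op e (G.op a (G.iv a)) := he' _
        _ = G.op (G.op a (G.iv a)) e := hcomm
    rw [hL] at h
    exact h
  calc G.op e a = G.op (G.op (G.op a (G.iv a)) e) (G.op e a) := star.symm
    _ = G.op a (G.op (G.iv a) (G.op e (G.op e a))) := by simp only [A]
    _ = G.op a (G.op (G.iv a) (G.op e a)) := by rw [he' a]
    _ = G.op a (G.op (G.op a (G.iv a)) e) := by rw [← k1]
    _ = G.op (G.op a (G.op a (G.iv a))) e := by rw [← A]
    _ = G.op a e := by rw [k2]

end InvSg
namespace DWBAux

open WeakBrace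

local infixl:65 " ⨥ " => WeakBrace.add
local infixl:70 " ⨰ " => WeakBrace.mul
local prefix:100 "∿" => WeakBrace.neg
local postfix:1024 "ᶻ" => WeakBrace.inv

variable {S : Type*} [DualWeakBrace S]

/-- The additive inverse semigroup of a weak brace. -/
def addSg (S : Type*) [WeakBrace S] : InvSg S :=
  ⟨WeakBrace.add, WeakBrace.neg, WeakBrace.add_assoc, WeakBrace.add_reg,
    WeakBrace.neg_reg, WeakBrace.neg_unique⟩

/-- The multiplicative inverse semigroup of a weak brace. -/
def mulSg (S : Type*) [WeakBrace S] : InvSg S :=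
  ⟨WeakBrace.mul, WeakBrace.inv, WeakBrace.mul_assoc, WeakBrace.mul_reg,
    WeakBrace.inv_reg, WeakBrace.inv_unique⟩

theorem A (a b c : S) : (a ⨥ b) ⨥ c = a ⨥ (b ⨥ c) := WeakBrace.add_assoc a b c
theorem M (a b c : S) : (a ⨰ b) ⨰ c = a ⨰ (b ⨰ c) := WeakBrace.mul_assoc a b c

theorem nn (a : S) : ∿(∿a) = a := (addSg S).iv_invol a
theorem ii (a : S) : (aᶻ)ᶻ = a := (mulSg S).iv_invol a
theorem nadd (a b : S) : ∿(a ⨥ b) = ∿b ⨥ ∿a := (addSg S).iv_op a b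
theorem imul (a b : S) : (a ⨰ b)ᶻ = bᶻ ⨰ aᶻ := (mulSg S).iv_op a b

theorem aidem_comm {e f : S} (he : e ⨥ e = e) (hf : f ⨥ f = f) : e ⨥ f = f ⨥ e :=
  (addSg S).idem_comm he hf
theorem aidem_op {e f : S} (he : e ⨥ e = e) (hf : f ⨥ f = f) : (e ⨥ f) ⨥ (e ⨥ f) = e ⨥ f :=
  (addSg S).idem_op he hf
theorem aidem_neg {e : S} (he : e ⨥ e = e) : ∿e = e := (addSg S).idem_iv he
theorem midem_comm {e f : S} (he : e ⨰ e = e) (hf : f ⨰ f = f) : e ⨰ f = f ⨰ e :=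
  (mulSg S).idem_comm he hf
theorem midem_op {e f : S} (he : e ⨰ e = e) (hf : f ⨰ f = f) : (e ⨰ f) ⨰ (e ⨰ f) = e ⨰ f :=
  (mulSg S).idem_op he hf
theorem midem_inv {e : S} (he : e ⨰ e = e) : eᶻ = e := (mulSg S).idem_iv he

theorem eps_idem (a : S) : (∿a ⨥ a) ⨥ (∿a ⨥ a) = ∿a ⨥ a := (addSg S).xx_idem' a
theorem sq_idem (a : S) : (a ⨥ ∿a) ⨥ (a ⨥ ∿a) = a ⨥ ∿a := (addSg S).xx_idem a

theorem cliff (a : S) : a ⨰ aᶻ = aᶻ ⨰ a := DualWeakBrace.clifford a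

theorem mul_eps (a : S) : a ⨰ (∿a ⨥ a) = a := by
  rw [← WeakBrace.link a, cliff a, ← M]
  exact WeakBrace.mul_reg a

theorem eps_inv (a : S) : ∿(aᶻ) ⨥ aᶻ = ∿a ⨥ a := by
  rw [← WeakBrace.link (aᶻ), ii, ← cliff, WeakBrace.link]

theorem lam_hom (a x y : S) : lam a (x ⨥ y) = lam a x ⨥ lam a y := by
  simp only [WeakBrace.lam]
  rw [WeakBrace.distrib]
  simp only [A]

theorem lam_neg (a x : S) : lam a (∿x) = ∿(lam a x) := by
  have c1 : (lam a x ⨥ lam a (∿x)) ⨥ lam a x = lam a x := by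
    rw [← lam_hom, ← lam_hom, WeakBrace.add_reg]
  have c2 : (lam a (∿x) ⨥ lam a x) ⨥ lam a (∿x) = lam a (∿x) := by
    rw [← lam_hom, ← lam_hom, WeakBrace.neg_reg]
  exact WeakBrace.neg_unique _ _ c1 c2

/-- `ε(a) + a⁰ = ε(a)`. -/
theorem eps_sq (a : S) : (∿a ⨥ a) ⨥ (a ⨥ ∿a) = ∿a ⨥ a := by
  have e1 : lam a (∿(aᶻ) ⨥ aᶻ) = ∿a ⨥ a := by
    rw [eps_inv]
    show ∿a ⨥ (a ⨰ (∿a ⨥ a)) = ∿a ⨥ a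
    rw [mul_eps]
  have e2 : lam a (∿(aᶻ) ⨥ aᶻ) = ∿(lam a (aᶻ)) ⨥ lam a (aᶻ) := by
    rw [lam_hom, lam_neg]
  have e3 : lam a (aᶻ) = ∿a ⨥ (∿a ⨥ a) := by
    show ∿a ⨥ (a ⨰ aᶻ) = ∿a ⨥ (∿a ⨥ a)
    rw [WeakBrace.link]
  have e4 : ∿(lam a (aᶻ)) = (∿a ⨥ a) ⨥ a := by
    rw [e3, nadd, aidem_neg (eps_idem a), nn]
  have N1 : ((∿a ⨥ a) ⨥ a) ⨥ (∿a ⨥ (∿a ⨥ a)) = ∿a ⨥ a := by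
    rw [← e4, ← e3]; rw [← e2]; exact e1
  have N1' : (∿a ⨥ a) ⨥ ((a ⨥ ∿a) ⨥ (∿a ⨥ a)) = ∿a ⨥ a := by
    simpa only [A] using N1
  calc (∿a ⨥ a) ⨥ (a ⨥ ∿a)
      = ((∿a ⨥ a) ⨥ (∿a ⨥ a)) ⨥ (a ⨥ ∿a) := by rw [eps_idem]
    _ = (∿a ⨥ a) ⨥ ((∿a ⨥ a) ⨥ (a ⨥ ∿a)) := by rw [A]
    _ = (∿a ⨥ a) ⨥ ((a ⨥ ∿a) ⨥ (∿a ⨥ a)) := by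
        rw [aidem_comm (eps_idem a) (sq_idem a)]
    _ = ∿a ⨥ a := N1'

/-- `(S,+)` is Clifford: `a - a = -a + a`. -/
theorem sigma_eq (a : S) : a ⨥ ∿a = ∿a ⨥ a := by
  have h1 : (∿a ⨥ a) ⨥ (a ⨥ ∿a) = ∿a ⨥ a := eps_sq a
  have h2 : (a ⨥ ∿a) ⨥ (∿a ⨥ a) = a ⨥ ∿a := by
    have := eps_sq (∿a); rwa [nn] at this
  rw [← h2, aidem_comm (sq_idem a) (eps_idem a), h1]

theorem add_central {e : S} (he : e ⨥ e = e) (x : S) : e ⨥ x = x ⨥ e :=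
  (addSg S).central (fun a => sigma_eq a) he x

theorem mul_central {e : S} (he : e ⨰ e = e) (x : S) : e ⨰ x = x ⨰ e :=
  (mulSg S).central (fun a => (cliff a)) he x

theorem midem_to_eps {f : S} (hf : f ⨰ f = f) : f = ∿f ⨥ f := by
  rw [← WeakBrace.link f, midem_inv hf, hf]

theorem midem_aidem {f : S} (hf : f ⨰ f = f) : f ⨥ f = f := by
  have h := midem_to_eps hf
  calc f ⨥ f = (∿f ⨥ f) ⨥ (∿f ⨥ f) := by rw [← h]
    _ = ∿f ⨥ f := eps_idem f
    _ = f := h.symm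

theorem mxx_idem (a : S) : (a ⨰ aᶻ) ⨰ (a ⨰ aᶻ) = a ⨰ aᶻ := (mulSg S).xx_idem a

theorem eps_midem (a : S) : (∿a ⨥ a) ⨰ (∿a ⨥ a) = ∿a ⨥ a := by
  rw [← WeakBrace.link a]; exact (mulSg S).xx_idem a

theorem sig_mul (a b : S) : ∿(a ⨰ b) ⨥ (a ⨰ b) = (∿a ⨥ a) ⨰ (∿b ⨥ b) := by
  calc ∿(a ⨰ b) ⨥ (a ⨰ b) = (a ⨰ b) ⨰ (a ⨰ b)ᶻ := (WeakBrace.link _).symm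
    _ = (a ⨰ b) ⨰ (bᶻ ⨰ aᶻ) := by rw [imul]
    _ = a ⨰ ((b ⨰ bᶻ) ⨰ aᶻ) := by simp only [M]
    _ = a ⨰ (aᶻ ⨰ (b ⨰ bᶻ)) := by rw [mul_central (mxx_idem b) (aᶻ)]
    _ = (a ⨰ aᶻ) ⨰ (b ⨰ bᶻ) := by rw [← M]
    _ = (∿a ⨥ a) ⨰ (∿b ⨥ b) := by rw [WeakBrace.link, WeakBrace.link]

theorem sig_add (x y : S) : ∿(x ⨥ y) ⨥ (x ⨥ y) = (∿x ⨥ x) ⨥ (∿y ⨥ y) := by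
  calc ∿(x ⨥ y) ⨥ (x ⨥ y) = (∿y ⨥ ∿x) ⨥ (x ⨥ y) := by rw [nadd]
    _ = ∿y ⨥ ((∿x ⨥ x) ⨥ y) := by simp only [A]
    _ = ∿y ⨥ (y ⨥ (∿x ⨥ x)) := by rw [add_central (eps_idem x) y]
    _ = (∿y ⨥ y) ⨥ (∿x ⨥ x) := by rw [A]
    _ = (∿x ⨥ x) ⨥ (∿y ⨥ y) := aidem_comm (eps_idem y) (eps_idem x)

theorem sig_neg (x : S) : ∿(∿x) ⨥ ∿x = ∿x ⨥ x := by
  rw [nn]; exact sigma_eq x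

theorem d1 {e f : S} (he : e ⨰ e = e) (hf : f ⨰ f = f) : (e ⨰ f) ⨥ e = e ⨰ f := by
  have hfa : f ⨥ f = f := midem_aidem hf
  have hea : e ⨥ e = e := midem_aidem he
  have hne : ∿e = e := aidem_neg hea
  have hg : (e ⨰ f) ⨰ (e ⨰ f) = e ⨰ f := midem_op he hf
  have hga : (e ⨰ f) ⨥ (e ⨰ f) = e ⨰ f := midem_aidem hg
  have hC : e ⨰ f = ((e ⨰ f) ⨥ e) ⨥ (e ⨰ f) := by
    conv_lhs => rw [← hfa]
    rw [WeakBrace.distrib, hne]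
  calc (e ⨰ f) ⨥ e = ((e ⨰ f) ⨥ (e ⨰ f)) ⨥ e := by rw [hga]
    _ = (e ⨰ f) ⨥ ((e ⨰ f) ⨥ e) := by rw [A]
    _ = (e ⨰ f) ⨥ (e ⨥ (e ⨰ f)) := by rw [aidem_comm hga hea]
    _ = e ⨰ f := by rw [← A, ← hC]

theorem d2 {e f : S} (he : e ⨰ e = e) (hf : f ⨰ f = f) : e ⨥ (e ⨰ f) = e ⨰ f := by
  rw [add_central (midem_aidem he) (e ⨰ f)]; exact d1 he hf

theorem d1f {e f : S} (he : e ⨰ e = e) (hf : f ⨰ f = f) : (e ⨰ f) ⨥ f = e ⨰ f := by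
  rw [midem_comm he hf]; exact d1 hf he

theorem z_eps (z : S) : z ⨥ (∿z ⨥ z) = z := by
  rw [← A]; exact WeakBrace.add_reg z

theorem eps_z (z : S) : (∿z ⨥ z) ⨥ z = z := by
  rw [← sigma_eq]; exact WeakBrace.add_reg z

theorem abs_r {z e : S} (h : (∿z ⨥ z) ⨥ e = ∿z ⨥ z) : z ⨥ e = z := by
  calc z ⨥ e = (z ⨥ (∿z ⨥ z)) ⨥ e := by rw [z_eps]
    _ = z ⨥ ((∿z ⨥ z) ⨥ e) := by rw [A]
    _ = z ⨥ (∿z ⨥ z) := by rw [h]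
    _ = z := z_eps z

theorem abs_l {z e : S} (h : e ⨥ (∿z ⨥ z) = ∿z ⨥ z) : e ⨥ z = z := by
  calc e ⨥ z = e ⨥ ((∿z ⨥ z) ⨥ z) := by rw [eps_z]
    _ = (e ⨥ (∿z ⨥ z)) ⨥ z := by rw [← A]
    _ = (∿z ⨥ z) ⨥ z := by rw [h]
    _ = z := eps_z z

theorem lam_comp (a b c : S) : lam a (lam b c) = lam (a ⨰ b) c := by
  have e0 : lam b c = ∿b ⨥ (b ⨰ c) := rfl
  have h1 : lam a (lam b c) = ∿(lam a b) ⨥ lam a (b ⨰ c) := by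
    rw [e0, lam_hom, lam_neg]
  have h2 : ∿(lam a b) = ∿(a ⨰ b) ⨥ a := by
    show ∿(∿a ⨥ (a ⨰ b)) = _
    rw [nadd, nn]
  have h3 : lam a (b ⨰ c) = ∿a ⨥ ((a ⨰ b) ⨰ c) := by
    show ∿a ⨥ (a ⨰ (b ⨰ c)) = _
    rw [← M]
  have habs : (a ⨥ ∿a) ⨥ ((a ⨰ b) ⨰ c) = (a ⨰ b) ⨰ c := by
    apply abs_l
    rw [sigma_eq, sig_mul (a ⨰ b) c, sig_mul a b, M]
    exact d2 (eps_midem a) (midem_op (eps_midem b) (eps_midem c))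
  calc lam a (lam b c) = (∿(a ⨰ b) ⨥ a) ⨥ (∿a ⨥ ((a ⨰ b) ⨰ c)) := by rw [h1, h2, h3]
    _ = ∿(a ⨰ b) ⨥ ((a ⨥ ∿a) ⨥ ((a ⨰ b) ⨰ c)) := by simp only [A]
    _ = ∿(a ⨰ b) ⨥ ((a ⨰ b) ⨰ c) := by rw [habs]
    _ = lam (a ⨰ b) c := rfl

theorem sig_lam (a c : S) : ∿(lam a c) ⨥ lam a c = (∿a ⨥ a) ⨰ (∿c ⨥ c) := by
  have h0 : lam a c = ∿a ⨥ (a ⨰ c) := rfl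
  rw [h0, sig_add, sig_neg, sig_mul]
  exact d2 (eps_midem a) (eps_midem c)

theorem sig_cdot (b c : S) : ∿(cdot b c) ⨥ cdot b c = (∿b ⨥ b) ⨰ (∿c ⨥ c) := by
  have h0 : cdot b c = lam b c ⨥ ∿c := rfl
  rw [h0, sig_add, sig_neg, sig_lam]
  exact d1f (eps_midem b) (eps_midem c)

theorem cdot_add_self (a z : S) : cdot a z ⨥ z = lam a z ⨥ (∿z ⨥ z) := by
  show (lam a z ⨥ ∿z) ⨥ z = _
  exact A (lam a z) (∿z) z

theorem main_eq (a b c : S) :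
    cdot (a ⨰ b) c = (cdot a (cdot b c) ⨥ cdot b c) ⨥ cdot a c := by
  have hA2 : lam a (cdot b c) = lam (a ⨰ b) c ⨥ ∿(lam a c) := by
    have e0 : cdot b c = lam b c ⨥ ∿c := rfl
    rw [e0, lam_hom, lam_neg, lam_comp]
  have hgm : ((∿b ⨥ b) ⨰ (∿c ⨥ c)) ⨰ ((∿b ⨥ b) ⨰ (∿c ⨥ c)) = (∿b ⨥ b) ⨰ (∿c ⨥ c) :=
    midem_op (eps_midem b) (eps_midem c)
  have hg : ((∿b ⨥ b) ⨰ (∿c ⨥ c)) ⨥ ((∿b ⨥ b) ⨰ (∿c ⨥ c)) = (∿b ⨥ b) ⨰ (∿c ⨥ c) :=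
    midem_aidem hgm
  have hsigL : ∿(lam (a ⨰ b) c) ⨥ lam (a ⨰ b) c
      = ((∿a ⨥ a) ⨰ (∿b ⨥ b)) ⨰ (∿c ⨥ c) := by
    rw [sig_lam (a ⨰ b) c, sig_mul a b]
  have hI1 : (((∿a ⨥ a) ⨰ (∿b ⨥ b)) ⨰ (∿c ⨥ c)) ⨥ ((∿a ⨥ a) ⨰ (∿c ⨥ c))
      = ((∿a ⨥ a) ⨰ (∿b ⨥ b)) ⨰ (∿c ⨥ c) := by
    have hre : ((∿a ⨥ a) ⨰ (∿b ⨥ b)) ⨰ (∿c ⨥ c) = ((∿a ⨥ a) ⨰ (∿c ⨥ c)) ⨰ (∿b ⨥ b) := by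
      rw [M, midem_comm (eps_midem b) (eps_midem c), ← M]
    rw [hre]
    exact d1 (midem_op (eps_midem a) (eps_midem c)) (eps_midem b)
  have hI2 : (((∿a ⨥ a) ⨰ (∿b ⨥ b)) ⨰ (∿c ⨥ c)) ⨥ ((∿b ⨥ b) ⨰ (∿c ⨥ c))
      = ((∿a ⨥ a) ⨰ (∿b ⨥ b)) ⨰ (∿c ⨥ c) := by
    have hre : ((∿a ⨥ a) ⨰ (∿b ⨥ b)) ⨰ (∿c ⨥ c) = ((∿b ⨥ b) ⨰ (∿c ⨥ c)) ⨰ (∿a ⨥ a) := by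
      rw [M, midem_comm (eps_midem a) hgm]
    rw [hre]
    exact d1 hgm (eps_midem a)
  have habs1 : lam (a ⨰ b) c ⨥ ((∿a ⨥ a) ⨰ (∿c ⨥ c)) = lam (a ⨰ b) c :=
    abs_r (by rw [hsigL]; exact hI1)
  have habs2 : lam (a ⨰ b) c ⨥ ((∿b ⨥ b) ⨰ (∿c ⨥ c)) = lam (a ⨰ b) c :=
    abs_r (by rw [hsigL]; exact hI2)
  have hmove : ((∿b ⨥ b) ⨰ (∿c ⨥ c)) ⨥ (lam a c ⨥ ∿c)
      = lam a c ⨥ (((∿b ⨥ b) ⨰ (∿c ⨥ c)) ⨥ ∿c) := by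
    rw [← A ((∿b ⨥ b) ⨰ (∿c ⨥ c)) (lam a c) (∿c), add_central hg (lam a c),
      A (lam a c) ((∿b ⨥ b) ⨰ (∿c ⨥ c)) (∿c)]
  symm
  calc (cdot a (cdot b c) ⨥ cdot b c) ⨥ cdot a c
      = (lam a (cdot b c) ⨥ (∿(cdot b c) ⨥ cdot b c)) ⨥ cdot a c := by rw [cdot_add_self]
    _ = ((lam (a ⨰ b) c ⨥ ∿(lam a c)) ⨥ ((∿b ⨥ b) ⨰ (∿c ⨥ c))) ⨥ cdot a c := by
        rw [hA2, sig_cdot]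
    _ = ((lam (a ⨰ b) c ⨥ ∿(lam a c)) ⨥ ((∿b ⨥ b) ⨰ (∿c ⨥ c))) ⨥ (lam a c ⨥ ∿c) := rfl
    _ = lam (a ⨰ b) c ⨥ (∿(lam a c) ⨥ (((∿b ⨥ b) ⨰ (∿c ⨥ c)) ⨥ (lam a c ⨥ ∿c))) := by
        simp only [A]
    _ = lam (a ⨰ b) c ⨥ (∿(lam a c) ⨥ (lam a c ⨥ (((∿b ⨥ b) ⨰ (∿c ⨥ c)) ⨥ ∿c))) := by
        rw [hmove]
    _ = lam (a ⨰ b) c ⨥ ((∿(lam a c) ⨥ lam a c) ⨥ (((∿b ⨥ b) ⨰ (∿c ⨥ c)) ⨥ ∿c)) := by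
        rw [← A (∿(lam a c)) (lam a c) (((∿b ⨥ b) ⨰ (∿c ⨥ c)) ⨥ ∿c)]
    _ = lam (a ⨰ b) c ⨥ (((∿a ⨥ a) ⨰ (∿c ⨥ c)) ⨥ (((∿b ⨥ b) ⨰ (∿c ⨥ c)) ⨥ ∿c)) := by
        rw [sig_lam]
    _ = ((lam (a ⨰ b) c ⨥ ((∿a ⨥ a) ⨰ (∿c ⨥ c))) ⨥ ((∿b ⨥ b) ⨰ (∿c ⨥ c))) ⨥ ∿c := by
        simp only [A]
    _ = (lam (a ⨰ b) c ⨥ ((∿b ⨥ b) ⨰ (∿c ⨥ c))) ⨥ ∿c := by rw [habs1]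
    _ = lam (a ⨰ b) c ⨥ ∿c := by rw [habs2]
    _ = cdot (a ⨰ b) c := rfl

end DWBAux

open WeakBrace
theorem stmt6 {S : Type*} [DualWeakBrace S] (a b c : S) :
    cdot (mul a b) c = add (add (cdot a (cdot b c)) (cdot b c)) (cdot a c) :=
  DWBAux.main_eq a b c
end

section
/- In a dual weak brace S, the set Fix(S) = {b ∈ S : for all a ∈ S, a + b = a ∘ b} is a left ideal of S, i.e., it is a full inverse subsemigroup of (S,+) (containing all idempotents, closed under + and additive inverses) and satisfies λ_a(Fix(S)) ⊆ Fix(S) for every a ∈ S, where λ_a(b) = -a + a ∘ b. -/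
namespace WBGeneric

variable {S : Type*}

private lemma g_iv_idem (op : S → S → S) (iv : S → S)
    (hU : ∀ a x : S, op (op a x) a = a → op (op x a) x = x → x = iv a)
    {e : S} (he : op e e = e) : iv e = e :=
  (hU e e (by rw [he, he]) (by rw [he, he])).symm

private lemma g_iv_iv (op : S → S → S) (iv : S → S)
    (hR : ∀ a : S, op (op a (iv a)) a = a)
    (hIR : ∀ a : S, op (op (iv a) a) (iv a) = iv a)
    (hU : ∀ a x : S, op (op a x) a = a → op (op x a) x = x → x = iv a)
    (a : S) : iv (iv a) = a :=
  (hU (iv a) a (hIR a) (hR a)).symm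

private lemma g_e_idem (op : S → S → S) (iv : S → S)
    (hA : ∀ a b c : S, op (op a b) c = op a (op b c))
    (hIR : ∀ a : S, op (op (iv a) a) (iv a) = iv a)
    (a : S) : op (op (iv a) a) (op (iv a) a) = op (iv a) a := by
  conv_lhs => rw [← hA]
  rw [hIR]

private lemma g_f_idem (op : S → S → S) (iv : S → S)
    (hA : ∀ a b c : S, op (op a b) c = op a (op b c))
    (hR : ∀ a : S, op (op a (iv a)) a = a)
    (a : S) : op (op a (iv a)) (op a (iv a)) = op a (iv a) := by
  conv_lhs => rw [← hA]
  rw [hR]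

private lemma g_idem_op (op : S → S → S) (iv : S → S)
    (hA : ∀ a b c : S, op (op a b) c = op a (op b c))
    (hR : ∀ a : S, op (op a (iv a)) a = a)
    (hIR : ∀ a : S, op (op (iv a) a) (iv a) = iv a)
    (hU : ∀ a x : S, op (op a x) a = a → op (op x a) x = x → x = iv a)
    {e f : S} (he : op e e = e) (hf : op f f = f) :
    op (op e f) (op e f) = op e f := by
  obtain ⟨x, hx⟩ : ∃ x, x = iv (op e f) := ⟨_, rfl⟩
  have hec : ∀ t : S, op e (op e t) = op e t := fun t => by rw [← hA, he]
  have hfc : ∀ t : S, op f (op f t) = op f t := fun t => by rw [← hA, hf]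
  have hx1 : op (op x (op e f)) x = x := by rw [hx]; exact hIR _
  have hx2 : op (op (op e f) x) (op e f) = op e f := by rw [hx]; exact hR _
  have hx1c : ∀ t : S, op x (op e (op f (op x t))) = op x t := fun t => by
    rw [← hA, ← hA, ← hA, hA x e f, hx1]
  have hA1 : op (op (op e f) (op (op f x) e)) (op e f) = op e f := by
    calc op (op (op e f) (op (op f x) e)) (op e f)
        = op e (op f (op f (op x (op e (op e f))))) := by simp only [hA]
      _ = op e (op f (op x (op e f))) := by rw [hec, hfc]
      _ = op (op (op e f) x) (op e f) := by simp only [hA]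
      _ = op e f := hx2
  have hB1 : op (op (op (op f x) e) (op e f)) (op (op f x) e) = op (op f x) e := by
    calc op (op (op (op f x) e) (op e f)) (op (op f x) e)
        = op f (op x (op e (op e (op f (op f (op x e)))))) := by simp only [hA]
      _ = op f (op x (op e (op f (op x e)))) := by rw [hec, hfc]
      _ = op f (op x e) := by rw [hx1c]
      _ = op (op f x) e := by simp only [hA]
  have hy : op (op f x) e = x := by
    have h := hU _ _ hA1 hB1
    rw [← hx] at h
    exact h
  have hxx : op x x = x := by
    conv_lhs => rw [← hy]
    calc op (op (op f x) e) (op (op f x) e)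
        = op f (op x (op e (op f (op x e)))) := by simp only [hA]
      _ = op f (op x e) := by rw [hx1c]
      _ = op (op f x) e := (hA f x e).symm
      _ = x := hy
  have h1 : iv x = x := g_iv_idem op iv hU hxx
  have h2 : op e f = x := by
    calc op e f = iv (iv (op e f)) := (g_iv_iv op iv hR hIR hU (op e f)).symm
      _ = iv x := by rw [← hx]
      _ = x := h1
  rw [h2]; exact hxx

private lemma g_idem_comm (op : S → S → S) (iv : S → S)
    (hA : ∀ a b c : S, op (op a b) c = op a (op b c))
    (hR : ∀ a : S, op (op a (iv a)) a = a)
    (hIR : ∀ a : S, op (op (iv a) a) (iv a) = iv a)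
    (hU : ∀ a x : S, op (op a x) a = a → op (op x a) x = x → x = iv a)
    {e f : S} (he : op e e = e) (hf : op f f = f) :
    op e f = op f e := by
  have hec : ∀ t : S, op e (op e t) = op e t := fun t => by rw [← hA, he]
  have hfc : ∀ t : S, op f (op f t) = op f t := fun t => by rw [← hA, hf]
  have h1 := g_idem_op op iv hA hR hIR hU he hf
  have h2 := g_idem_op op iv hA hR hIR hU hf he
  have hA2 : op (op (op e f) (op f e)) (op e f) = op e f := by
    calc op (op (op e f) (op f e)) (op e f)
        = op e (op f (op f (op e (op e f)))) := by simp only [hA]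
      _ = op e (op f (op e f)) := by rw [hfc, hec]
      _ = op e f := by rw [← hA]; exact h1
  have hB2 : op (op (op f e) (op e f)) (op f e) = op f e := by
    calc op (op (op f e) (op e f)) (op f e)
        = op f (op e (op e (op f (op f e)))) := by simp only [hA]
      _ = op f (op e (op f e)) := by rw [hec, hfc]
      _ = op f e := by rw [← hA]; exact h2
  have h3 : op f e = iv (op e f) := hU _ _ hA2 hB2
  rw [h3]
  exact (g_iv_idem op iv hU h1).symm

private lemma g_iv_op (op : S → S → S) (iv : S → S)
    (hA : ∀ a b c : S, op (op a b) c = op a (op b c))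
    (hR : ∀ a : S, op (op a (iv a)) a = a)
    (hIR : ∀ a : S, op (op (iv a) a) (iv a) = iv a)
    (hU : ∀ a x : S, op (op a x) a = a → op (op x a) x = x → x = iv a)
    (a b : S) : iv (op a b) = op (iv b) (iv a) := by
  have hfb := g_f_idem op iv hA hR b
  have hea := g_e_idem op iv hA hIR a
  have hcomm := g_idem_comm op iv hA hR hIR hU hfb hea
  have hA3 : op (op (op a b) (op (iv b) (iv a))) (op a b) = op a b := by
    calc op (op (op a b) (op (iv b) (iv a))) (op a b)
        = op a (op (op (op b (iv b)) (op (iv a) a)) b) := by simp only [hA]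
      _ = op a (op (op (op (iv a) a) (op b (iv b))) b) := by rw [hcomm]
      _ = op (op a (op (iv a) a)) (op (op b (iv b)) b) := by simp only [hA]
      _ = op a b := by rw [hR b, ← hA, hR a]
  have hB3 : op (op (op (iv b) (iv a)) (op a b)) (op (iv b) (iv a)) = op (iv b) (iv a) := by
    calc op (op (op (iv b) (iv a)) (op a b)) (op (iv b) (iv a))
        = op (op (iv b) (op (op (iv a) a) (op b (iv b)))) (iv a) := by simp only [hA]
      _ = op (op (iv b) (op (op b (iv b)) (op (iv a) a))) (iv a) := by rw [hcomm]
      _ = op (op (iv b) (op b (iv b))) (op (op (iv a) a) (iv a)) := by simp only [hA]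
      _ = op (iv b) (iv a) := by rw [hIR a, ← hA, hIR b]
  exact (hU _ _ hA3 hB3).symm

end WBGeneric

namespace WBAux

open WeakBrace WBGeneric

variable {S : Type*} [DualWeakBrace S]

private lemma aa : ∀ a b c : S, add (add a b) c = add a (add b c) := WeakBrace.add_assoc
private lemma ma : ∀ a b c : S, mul (mul a b) c = mul a (mul b c) := WeakBrace.mul_assoc

private lemma negIdem {e : S} (he : add e e = e) : neg e = e :=
  g_iv_idem add neg WeakBrace.neg_unique he

private lemma invIdem {e : S} (he : mul e e = e) : inv e = e :=
  g_iv_idem mul inv WeakBrace.inv_unique he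

private lemma negNeg (a : S) : neg (neg a) = a :=
  g_iv_iv add neg WeakBrace.add_reg WeakBrace.neg_reg WeakBrace.neg_unique a

private lemma invInv (a : S) : inv (inv a) = a :=
  g_iv_iv mul inv WeakBrace.mul_reg WeakBrace.inv_reg WeakBrace.inv_unique a

private lemma addIC {e f : S} (he : add e e = e) (hf : add f f = f) : add e f = add f e :=
  g_idem_comm add neg WeakBrace.add_assoc WeakBrace.add_reg WeakBrace.neg_reg
    WeakBrace.neg_unique he hf

private lemma mulIC {e f : S} (he : mul e e = e) (hf : mul f f = f) : mul e f = mul f e :=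
  g_idem_comm mul inv WeakBrace.mul_assoc WeakBrace.mul_reg WeakBrace.inv_reg
    WeakBrace.inv_unique he hf

private lemma negAdd (a b : S) : neg (add a b) = add (neg b) (neg a) :=
  g_iv_op add neg WeakBrace.add_assoc WeakBrace.add_reg WeakBrace.neg_reg
    WeakBrace.neg_unique a b

private lemma invMul (a b : S) : inv (mul a b) = mul (inv b) (inv a) :=
  g_iv_op mul inv WeakBrace.mul_assoc WeakBrace.mul_reg WeakBrace.inv_reg
    WeakBrace.inv_unique a b

private lemma eAI (a : S) : add (add (neg a) a) (add (neg a) a) = add (neg a) a :=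
  g_e_idem add neg WeakBrace.add_assoc WeakBrace.neg_reg a

private lemma fAI (a : S) : add (add a (neg a)) (add a (neg a)) = add a (neg a) :=
  g_f_idem add neg WeakBrace.add_assoc WeakBrace.add_reg a

private lemma a_e (a : S) : add a (add (neg a) a) = a := by
  rw [← aa]; exact WeakBrace.add_reg a

/-- multiplicative idempotents are central (Clifford) -/
private lemma mulCentral {u : S} (hu : mul u u = u) (a : S) : mul a u = mul u a := by
  have hui : inv u = u := invIdem hu
  have hsid : mul (mul (inv a) a) (mul (inv a) a) = mul (inv a) a :=
    g_e_idem mul inv WeakBrace.mul_assoc WeakBrace.inv_reg a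
  have hcsu : mul (mul (inv a) a) u = mul u (mul (inv a) a) := mulIC hsid hu
  have hcl := DualWeakBrace.clifford (mul a u)
  rw [invMul, hui] at hcl
  -- hcl : mul (mul a u) (mul u (inv a)) = mul (mul u (inv a)) (mul a u)
  have h1 : mul (mul a u) (mul u (inv a)) = mul (mul a u) (inv a) := by
    calc mul (mul a u) (mul u (inv a)) = mul a (mul (mul u u) (inv a)) := by simp only [ma]
      _ = mul (mul a u) (inv a) := by rw [hu, ← ma]
  have h2 : mul (mul u (inv a)) (mul a u) = mul u (mul (inv a) a) := by
    calc mul (mul u (inv a)) (mul a u) = mul u (mul (mul (inv a) a) u) := by simp only [ma]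
      _ = mul u (mul u (mul (inv a) a)) := by rw [hcsu]
      _ = mul (mul u u) (mul (inv a) a) := by rw [← ma]
      _ = mul u (mul (inv a) a) := by rw [hu]
  have h3 : mul (mul a u) (inv a) = mul u (mul (inv a) a) := by rw [← h1, hcl, h2]
  have haS : mul a (mul (inv a) a) = a := by rw [← ma]; exact WeakBrace.mul_reg a
  calc mul a u = mul (mul a (mul (inv a) a)) u := by rw [haS]
    _ = mul a (mul (mul (inv a) a) u) := ma _ _ _
    _ = mul a (mul u (mul (inv a) a)) := by rw [hcsu]
    _ = mul (mul (mul a u) (inv a)) a := by simp only [ma]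
    _ = mul (mul u (mul (inv a) a)) a := by rw [h3]
    _ = mul u (mul (mul (inv a) a) a) := ma _ _ _
    _ = mul u (mul (mul a (inv a)) a) := by rw [← DualWeakBrace.clifford a]
    _ = mul u a := by rw [WeakBrace.mul_reg]

/-- multiplicative idempotent is additive idempotent -/
private lemma miai {u : S} (hu : mul u u = u) : add u u = u := by
  have hl := WeakBrace.link u
  rw [invIdem hu, hu] at hl
  -- hl : u = add (neg u) u
  calc add u u = add (add (neg u) u) (add (neg u) u) := by rw [← hl]
    _ = add (neg u) u := eAI u
    _ = u := hl.symm

/-- additive idempotent is multiplicative idempotent -/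
private lemma aimi {u : S} (hu : add u u = u) : mul u u = u := by
  have hl := WeakBrace.link u
  rw [negIdem hu, hu] at hl
  -- hl : mul u (inv u) = u
  have h := WeakBrace.mul_reg u
  rw [hl] at h
  exact h

/-- e a := -a + a is multiplicatively idempotent -/
private lemma eMI (a : S) : mul (add (neg a) a) (add (neg a) a) = add (neg a) a := by
  rw [← WeakBrace.link a]
  exact g_f_idem mul inv WeakBrace.mul_assoc WeakBrace.mul_reg a

private lemma negMul (a b : S) :
    neg (mul a b) = add (add (neg a) (mul a (neg b))) (neg a) := by
  refine (WeakBrace.neg_unique _ _ ?_ ?_).symm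
  · calc add (add (mul a b) (add (add (neg a) (mul a (neg b))) (neg a))) (mul a b)
        = add (add (add (add (mul a b) (neg a)) (mul a (neg b))) (neg a)) (mul a b) := by
          simp only [WeakBrace.add_assoc]
      _ = add (add (mul a (add b (neg b))) (neg a)) (mul a b) := by rw [← WeakBrace.distrib]
      _ = mul a (add (add b (neg b)) b) := by rw [← WeakBrace.distrib]
      _ = mul a b := by rw [WeakBrace.add_reg]
  · calc add (add (add (add (neg a) (mul a (neg b))) (neg a)) (mul a b))
          (add (add (neg a) (mul a (neg b))) (neg a))
        = add (neg a) (add (add (add (mul a (neg b)) (neg a)) (mul a b))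
            (add (neg a) (add (mul a (neg b)) (neg a)))) := by simp only [WeakBrace.add_assoc]
      _ = add (neg a) (add (mul a (add (neg b) b))
            (add (neg a) (add (mul a (neg b)) (neg a)))) := by rw [← WeakBrace.distrib]
      _ = add (neg a) (add (add (add (mul a (add (neg b) b)) (neg a)) (mul a (neg b)))
            (neg a)) := by simp only [WeakBrace.add_assoc]
      _ = add (neg a) (add (mul a (add (add (neg b) b) (neg b))) (neg a)) := by
          rw [← WeakBrace.distrib]
      _ = add (neg a) (add (mul a (neg b)) (neg a)) := by rw [WeakBrace.neg_reg]
      _ = add (add (neg a) (mul a (neg b))) (neg a) := by simp only [WeakBrace.add_assoc]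

private lemma eabL (a b : S) :
    add (neg (mul a b)) (mul a b) = add (neg a) (mul a (add (neg b) b)) := by
  rw [negMul]
  calc add (add (add (neg a) (mul a (neg b))) (neg a)) (mul a b)
      = add (neg a) (add (add (mul a (neg b)) (neg a)) (mul a b)) := by
        simp only [WeakBrace.add_assoc]
    _ = add (neg a) (mul a (add (neg b) b)) := by rw [← WeakBrace.distrib]

private lemma eabR (a b : S) :
    add (neg (mul a b)) (mul a b) = mul (add (neg b) b) (add (neg a) a) := by
  have h1 := WeakBrace.link (mul a b)
  rw [invMul] at h1
  calc add (neg (mul a b)) (mul a b)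
      = mul (mul a b) (mul (inv b) (inv a)) := h1.symm
    _ = mul (mul a (mul b (inv b))) (inv a) := by simp only [ma]
    _ = mul (mul a (add (neg b) b)) (inv a) := by rw [WeakBrace.link]
    _ = mul (mul (add (neg b) b) a) (inv a) := by rw [mulCentral (eMI b) a]
    _ = mul (add (neg b) b) (mul a (inv a)) := ma _ _ _
    _ = mul (add (neg b) b) (add (neg a) a) := by rw [WeakBrace.link]

/-- KEY: `λ_a(u) = e_a ∘ u` for additive idempotents `u`. -/
private lemma lamE {u : S} (hu : add u u = u) (a : S) :
    add (neg a) (mul a u) = mul u (add (neg a) a) := by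
  have h := (eabL a u).symm.trans (eabR a u)
  rw [negIdem hu, hu] at h
  exact h

private lemma pqMI {p q : S} (hp : add p p = p) (hq : add q q = q) :
    mul (mul p q) (mul p q) = mul p q := by
  have hpm := aimi hp
  have hqm := aimi hq
  calc mul (mul p q) (mul p q) = mul p (mul (mul q p) q) := by simp only [ma]
    _ = mul p (mul (mul p q) q) := by rw [mulIC hqm hpm]
    _ = mul (mul p p) (mul q q) := by simp only [ma]
    _ = mul p q := by rw [hpm, hqm]

private lemma o1 {p q : S} (hp : add p p = p) (hq : add q q = q) :
    add p (mul p q) = mul p q := by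
  have h := lamE hq p
  rw [negIdem hp, hp, mulIC (aimi hq) (aimi hp)] at h
  exact h

private lemma o2 {p q : S} (hp : add p p = p) (hq : add q q = q) :
    add (mul p q) p = mul p q := by
  rw [addIC (miai (pqMI hp hq)) hp]
  exact o1 hp hq

private lemma o3 {p q : S} (hp : add p p = p) (hq : add q q = q) :
    add (mul p q) q = mul p q := by
  rw [mulIC (aimi hp) (aimi hq)]
  exact o2 hq hp

private lemma o4 {p q : S} (hp : add p p = p) (hq : add q q = q)
    (h : add p q = p) : mul p q = p := by
  have hd := WeakBrace.distrib p p q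
  rw [h, aimi hp, negIdem hp, hp, o1 hp hq] at hd
  exact hd.symm

private lemma o5 {p q : S} (hp : add p p = p) (hq : add q q = q)
    (h : mul p q = p) : add p q = p := by
  calc add p q = add (mul p q) q := by rw [h]
    _ = mul p q := o3 hp hq
    _ = p := h

/-- sum and product of additive idempotents coincide -/
private lemma EE {p q : S} (hp : add p p = p) (hq : add q q = q) :
    mul p q = add p q := by
  have hsAI : add (add p q) (add p q) = add p q := by
    calc add (add p q) (add p q) = add p (add (add q p) q) := by simp only [aa]
      _ = add p (add (add p q) q) := by rw [addIC hq hp]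
      _ = add (add p p) (add q q) := by simp only [aa]
      _ = add p q := by rw [hp, hq]
  have hmAI : add (mul p q) (mul p q) = mul p q := miai (pqMI hp hq)
  have h1 : add (mul p q) (add p q) = mul p q := by
    calc add (mul p q) (add p q) = add (add (mul p q) p) q := (aa _ p q).symm
      _ = add (mul p q) q := by rw [o2 hp hq]
      _ = mul p q := o3 hp hq
  have hsp : add (add p q) p = add p q := by
    calc add (add p q) p = add p (add q p) := aa _ _ _
      _ = add p (add p q) := by rw [addIC hq hp]
      _ = add (add p p) q := by simp only [aa]
      _ = add p q := by rw [hp]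
  have hsq : add (add p q) q = add p q := by rw [aa, hq]
  have h2m : mul (add p q) (mul p q) = add p q := by
    rw [← ma, o4 hsAI hp hsp, o4 hsAI hq hsq]
  have h2 : add (add p q) (mul p q) = add p q := o5 hsAI hmAI h2m
  calc mul p q = add (mul p q) (add p q) := h1.symm
    _ = add (add p q) (mul p q) := addIC hmAI hsAI
    _ = add p q := h2

/-- MAIN: `a ∘ u = a + u` for every additive idempotent `u`. -/
private lemma aMulE (a : S) {u : S} (hu : add u u = u) : mul a u = add a u := by
  have huM : mul u u = u := aimi hu
  have step1 : add (neg a) (mul a u) = add (add (neg a) a) u := by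
    rw [lamE hu a, EE hu (eAI a)]
    exact addIC hu (eAI a)
  have step2 : add (add a (neg a)) (mul a u) = add a u := by
    calc add (add a (neg a)) (mul a u) = add a (add (neg a) (mul a u)) := aa _ _ _
      _ = add a (add (add (neg a) a) u) := by rw [step1]
      _ = add (add a (add (neg a) a)) u := (aa _ _ _).symm
      _ = add a u := by rw [a_e]
  have hfa := fAI a
  have hg : mul u a = add u (add (add a (neg a)) (mul u a)) := by
    have hd := WeakBrace.distrib u (add a (neg a)) a
    rw [WeakBrace.add_reg, negIdem hu, EE hu hfa] at hd
    -- hd : mul u a = add (add (add u (add a (neg a))) u) (mul u a)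
    have h5 : add (add (add u (add a (neg a))) u) (mul u a)
        = add u (add (add a (neg a)) (mul u a)) := by
      calc add (add (add u (add a (neg a))) u) (mul u a)
          = add u (add (add (add a (neg a)) u) (mul u a)) := by simp only [aa]
        _ = add u (add (add u (add a (neg a))) (mul u a)) := by rw [addIC hfa hu]
        _ = add (add u u) (add (add a (neg a)) (mul u a)) := by simp only [aa]
        _ = add u (add (add a (neg a)) (mul u a)) := by rw [hu]
    rw [h5] at hd
    exact hd
  have step4 : add (add a (neg a)) (mul u a) = mul u a := by
    conv_lhs => rw [hg]
    calc add (add a (neg a)) (add u (add (add a (neg a)) (mul u a)))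
        = add (add (add a (neg a)) u) (add (add a (neg a)) (mul u a)) := (aa _ _ _).symm
      _ = add (add u (add a (neg a))) (add (add a (neg a)) (mul u a)) := by rw [addIC hfa hu]
      _ = add u (add (add (add a (neg a)) (add a (neg a))) (mul u a)) := by simp only [aa]
      _ = add u (add (add a (neg a)) (mul u a)) := by rw [hfa]
      _ = mul u a := hg.symm
  calc mul a u = mul u a := mulCentral huM a
    _ = add (add a (neg a)) (mul u a) := step4.symm
    _ = add (add a (neg a)) (mul a u) := by rw [mulCentral huM a]
    _ = add a u := step2

/-- elements of `Fix(S)` commute with additive idempotents -/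
private lemma Fcomm {b : S} (hb : ∀ a : S, add a b = mul a b) {u : S}
    (hu : add u u = u) : add u b = add b u := by
  rw [hb u, ← mulCentral (aimi hu) b]
  exact aMulE b hu

end WBAux


open WeakBrace
theorem stmt9 {S : Type*} [DualWeakBrace S] :
    IsLeftIdeal {b : S | ∀ a : S, add a b = mul a b} := by
  constructor
  · refine ⟨?_, ?_, ?_⟩
    · -- idempotents belong to Fix(S)
      intro e he a
      exact (WBAux.aMulE a he).symm
    · -- closed under addition
      intro b hb c hc a
      rw [WeakBrace.distrib, ← hb a, ← hc a]
      calc add a (add b c)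
          = add (add a (add (neg a) a)) (add b c) := by rw [WBAux.a_e]
        _ = add a (add (add (add (neg a) a) b) c) := by simp only [WeakBrace.add_assoc]
        _ = add a (add (add b (add (neg a) a)) c) := by rw [WBAux.Fcomm hb (WBAux.eAI a)]
        _ = add (add (add a b) (neg a)) (add a c) := by simp only [WeakBrace.add_assoc]
    · -- closed under negation
      intro b hb a
      have h1 : neg (mul a (neg b)) = add b (neg a) := by
        calc neg (mul a (neg b))
            = add (add (neg a) (mul a (neg (neg b)))) (neg a) := WBAux.negMul a (neg b)
          _ = add (add (neg a) (mul a b)) (neg a) := by rw [WBAux.negNeg]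
          _ = add (add (neg a) (add a b)) (neg a) := by rw [← hb a]
          _ = add (add (add (neg a) a) b) (neg a) := by simp only [WeakBrace.add_assoc]
          _ = add (add b (add (neg a) a)) (neg a) := by rw [WBAux.Fcomm hb (WBAux.eAI a)]
          _ = add b (add (add (neg a) a) (neg a)) := WeakBrace.add_assoc _ _ _
          _ = add b (neg a) := by rw [WeakBrace.neg_reg]
      calc add a (neg b) = neg (add b (neg a)) := by rw [WBAux.negAdd, WBAux.negNeg]
        _ = neg (neg (mul a (neg b))) := by rw [h1]
        _ = mul a (neg b) := WBAux.negNeg _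
  · -- stable under the λ-maps
    intro a b hb c
    have hl : lam a b = add (add (neg a) a) b := by
      unfold lam
      rw [← hb a, ← WeakBrace.add_assoc]
    rw [hl, WeakBrace.distrib, WBAux.aMulE c (WBAux.eAI a), ← hb c]
    calc add c (add (add (neg a) a) b)
        = add (add c (add (neg c) c)) (add (add (neg a) a) b) := by rw [WBAux.a_e]
      _ = add c (add (add (add (neg c) c) (add (neg a) a)) b) := by
          simp only [WeakBrace.add_assoc]
      _ = add c (add (add (add (neg a) a) (add (neg c) c)) b) := by
          rw [WBAux.addIC (WBAux.eAI c) (WBAux.eAI a)]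
      _ = add (add (add c (add (neg a) a)) (neg c)) (add c b) := by
          simp only [WeakBrace.add_assoc]
end
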